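/- Let A = [a₁,…,a_r] be an admissible linear chain. Then the chain TW_{a_r−1} ∗ TW_{a_{r−1}−1} ∗ ⋯ ∗ TW_{a₁−1} is admissible and its inductance equals 1 − e(Aᵀ). (That is, A* = TW_{a_r−1} ∗ ⋯ ∗ TW_{a₁−1}.) -/

import Mathlib

/-- The tridiagonal matrix associated to a linear chain `A = [a₁,…,a_r]`:
diagonal entries `aᵢ`, entries `-1` immediately above/below the diagonal, `0` elsewhere. -/
def chainMatrix (A : List ℤ) : Matrix (Fin A.length) (Fin A.length) ℤ :=
  fun i j =>
    if i = j then A.get i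
    else if (i : ℕ) + 1 = (j : ℕ) ∨ (j : ℕ) + 1 = (i : ℕ) then -1 else 0

/-- The discriminant `d(A)` of a linear chain: the determinant of `chainMatrix A`
(the `0 × 0` determinant being `1` for the empty list). -/
def disc (A : List ℤ) : ℤ := (chainMatrix A).det

/-- A linear chain is admissible if it is nonempty and all of its entries are `≥ 2`. -/
def Admissible (A : List ℤ) : Prop := A ≠ [] ∧ ∀ a ∈ A, 2 ≤ a

/-- The inductance `e(A) = d(A̅)/d(A)` of a linear chain, as a rational number. -/
def inductance (A : List ℤ) : ℚ := (disc A.tail : ℚ) / (disc A : ℚ)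

/-- `TW n`: the list consisting of `n` copies of the integer `2`. -/
def TW (n : ℕ) : List ℤ := List.replicate n 2

/-- The `∗`-product of two (nonempty) integer lists:
`[a₁,…,a_r] ∗ [b₁,…,b_s] = [a₁,…,a_{r−1}, a_r + b₁ − 1, b₂,…,b_s]`. -/
def sprod (A B : List ℤ) : List ℤ :=
  A.dropLast ++ (A.getLast! + B.head! - 1) :: B.tail

/-- The `∗`-product of a nonempty list of nonempty integer lists. -/
def sprodAll : List (List ℤ) → List ℤ
  | [] => []
  | [l] => l
  | l :: l' :: ls => sprod l (sprodAll (l' :: ls))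

lemma disc_nil : disc ([] : List ℤ) = 1 := Matrix.det_fin_zero

lemma disc_singleton (a : ℤ) : disc [a] = a := by
  simp [disc, Matrix.det_fin_one, chainMatrix]

lemma chainMatrix_submatrix_succ (x : ℤ) (l : List ℤ) :
    (chainMatrix (x :: l)).submatrix Fin.succ Fin.succ = chainMatrix l := by
  ext i j
  simp only [Matrix.submatrix_apply, chainMatrix, Fin.succ_inj, Fin.val_succ,
    add_left_inj]
  split_ifs with h h2
  · subst h; rfl
  · rfl
  · rfl

lemma disc_cons (a b : ℤ) (C : List ℤ) :
    disc (a :: b :: C) = a * disc (b :: C) - disc C := by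
  have hd : disc (a :: b :: C) =
      Matrix.det (fun i j : Fin (C.length + 2) => chainMatrix (a :: b :: C) i j) := rfl
  set M : Matrix (Fin (C.length + 2)) (Fin (C.length + 2)) ℤ :=
    (fun i j : Fin (C.length + 2) => chainMatrix (a :: b :: C) i j) with hM
  have hM00 : M 0 0 = a := by simp [hM, chainMatrix]
  have hM10 : M 1 0 = -1 := by
    simp [hM, chainMatrix, Fin.ext_iff]
  have hMi0 : ∀ i : Fin C.length, M i.succ.succ 0 = 0 := by
    intro i
    simp only [hM, chainMatrix, Fin.ext_iff, Fin.val_succ, Fin.val_zero]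
    norm_num
  have h0 := Matrix.det_succ_column_zero M
  rw [Fin.sum_univ_succ, Fin.sum_univ_succ] at h0
  rw [Finset.sum_eq_zero (fun i _ => by rw [hMi0]; ring)] at h0
  have hsub0 : (M.submatrix ((0 : Fin (C.length+2)).succAbove) Fin.succ).det
      = disc (b :: C) := by
    rw [Fin.succAbove_zero]
    have : M.submatrix Fin.succ Fin.succ = chainMatrix (b :: C) :=
      chainMatrix_submatrix_succ a (b :: C)
    rw [this]; rfl
  set N := M.submatrix ((1 : Fin (C.length+2)).succAbove) Fin.succ with hN
  have hsa0 : ((1 : Fin (C.length+2)).succAbove) 0 = 0 := Fin.succ_succAbove_zero 0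
  have hN0j0 : N 0 0 = -1 := by
    show M ((1 : Fin (C.length+2)).succAbove 0) (Fin.succ 0) = -1
    simp [hN, Matrix.submatrix_apply, hsa0, hM, chainMatrix, Fin.ext_iff]
  have hN0j : ∀ j : Fin C.length, N 0 j.succ = 0 := by
    intro j
    show M ((1 : Fin (C.length+2)).succAbove 0) j.succ.succ = 0
    simp only [hN, Matrix.submatrix_apply, hsa0, hM, chainMatrix, Fin.ext_iff,
      Fin.val_succ, Fin.val_zero]
    norm_num
  have hNsub : N.submatrix Fin.succ ((0 : Fin (C.length+1)).succAbove) = chainMatrix C := by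
    ext k j
    have h1 : ((1 : Fin (C.length+2)).succAbove) k.succ = k.succ.succ := by
      have := Fin.succ_succAbove_succ (0 : Fin (C.length+1)) k
      rwa [Fin.succAbove_zero] at this
    simp only [Matrix.submatrix_apply, Fin.succAbove_zero, hN, h1]
    have e1 : (chainMatrix (b :: C)).submatrix Fin.succ Fin.succ k j = chainMatrix C k j :=
      congrFun (congrFun (chainMatrix_submatrix_succ b C) k) j
    have e2 : (chainMatrix (a :: b :: C)).submatrix Fin.succ Fin.succ k.succ j.succ
        = chainMatrix (b :: C) k.succ j.succ :=
      congrFun (congrFun (chainMatrix_submatrix_succ a (b :: C)) k.succ) j.succ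
    exact e2.trans e1
  have hNdet : N.det = -disc C := by
    rw [Matrix.det_succ_row_zero N, Fin.sum_univ_succ]
    rw [Finset.sum_eq_zero (fun j _ => by rw [hN0j]; ring)]
    rw [hN0j0, hNsub]
    simp [disc]
  rw [Fin.succ_zero_eq_one] at h0
  rw [hM00, hM10, hsub0, ← hN, hNdet] at h0
  rw [hd, h0]
  norm_num
  ring

lemma Admissible.tail' {a : ℤ} {B : List ℤ} (h : Admissible (a :: B)) (hB : B ≠ []) :
    Admissible B :=
  ⟨hB, fun x hx => h.2 x (List.mem_cons_of_mem _ hx)⟩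

lemma disc_adm {A : List ℤ} (h : Admissible A) :
    0 < disc A.tail ∧ disc A.tail < disc A := by
  induction A with
  | nil => exact absurd rfl h.1
  | cons a B ih =>
    have ha : 2 ≤ a := h.2 a (List.mem_cons_self)
    cases B with
    | nil =>
      refine ⟨by simp [disc_nil], ?_⟩
      rw [List.tail_cons, disc_nil, disc_singleton]; omega
    | cons b C =>
      have hB : Admissible (b :: C) := h.tail' (List.cons_ne_nil _ _)
      obtain ⟨h1, h2⟩ := ih hB
      rw [List.tail_cons] at h1 h2 ⊢
      refine ⟨h1.trans h2, ?_⟩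
      rw [disc_cons]
      nlinarith

lemma disc_pos {A : List ℤ} (h : Admissible A) : 0 < disc A :=
  (disc_adm h).1.trans (disc_adm h).2

lemma inductance_pos {A : List ℤ} (h : Admissible A) : 0 < inductance A := by
  obtain ⟨h1, h2⟩ := disc_adm h
  have h1' : (0:ℚ) < (disc A.tail : ℚ) := by exact_mod_cast h1
  have h2' : (0:ℚ) < (disc A : ℚ) := by exact_mod_cast h1.trans h2
  exact div_pos h1' h2'

lemma inductance_lt_one {A : List ℤ} (h : Admissible A) : inductance A < 1 := by
  obtain ⟨h1, h2⟩ := disc_adm h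
  have h2' : (0:ℚ) < (disc A : ℚ) := by exact_mod_cast h1.trans h2
  rw [inductance, div_lt_one h2']
  exact_mod_cast h2

lemma inductance_cons {a : ℤ} {B : List ℤ} (hB : B ≠ []) (h : Admissible (a :: B)) :
    inductance (a :: B) = 1 / ((a : ℚ) - inductance B) := by
  obtain ⟨b, C, rfl⟩ := List.exists_cons_of_ne_nil hB
  have hadm : Admissible (b :: C) := h.tail' hB
  obtain ⟨h1, h2⟩ := disc_adm hadm
  rw [List.tail_cons] at h1 h2
  have hd2 : (0:ℚ) < (disc (b :: C) : ℚ) := by exact_mod_cast h1.trans h2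
  have hd3 : 0 < disc (a :: b :: C) := disc_pos h
  rw [disc_cons] at hd3
  have hd3' : (0:ℚ) < (a : ℚ) * (disc (b :: C) : ℚ) - (disc C : ℚ) := by exact_mod_cast hd3
  rw [inductance, inductance, List.tail_cons, List.tail_cons, disc_cons]
  push_cast
  have hne1 : ((disc (b :: C)):ℚ) ≠ 0 := ne_of_gt hd2
  have hne2 : (a:ℚ) * (disc (b :: C):ℚ) - (disc C:ℚ) ≠ 0 := ne_of_gt hd3'
  field_simp

lemma disc_head_add_one (b : ℤ) (T : List ℤ) :
    disc ((b+1) :: T) = disc (b :: T) + disc T := by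
  cases T with
  | nil => rw [disc_singleton, disc_singleton, disc_nil]
  | cons t T' => rw [disc_cons, disc_cons]; ring

lemma e_singleton (a : ℤ) : inductance [a] = 1 / (a : ℚ) := by
  rw [inductance, List.tail_cons, disc_nil, disc_singleton]
  norm_num

lemma e_head_succ {b : ℤ} {T : List ℤ} (h : Admissible (b :: T)) :
    inductance ((b+1) :: T) = 1 - 1 / (1 + inductance (b :: T)) := by
  obtain ⟨h1, h2⟩ := disc_adm h
  rw [List.tail_cons] at h1 h2
  have hd : (0:ℚ) < (disc (b :: T) : ℚ) := by exact_mod_cast h1.trans h2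
  have ht : (0:ℚ) < (disc T : ℚ) := by exact_mod_cast h1
  rw [inductance, inductance, List.tail_cons, List.tail_cons, disc_head_add_one]
  have hne1 : ((disc (b :: T)):ℚ) ≠ 0 := ne_of_gt hd
  have hne2 : ((disc (b :: T)):ℚ) + (disc T:ℚ) ≠ 0 := by positivity
  have hne3 : 1 + (disc T:ℚ) / (disc (b :: T):ℚ) ≠ 0 := by positivity
  push_cast
  field_simp
  ring

lemma TW_succ_cons (n : ℕ) : TW (n+1) = 2 :: TW n := rfl

lemma adm_TW_append (k : ℕ) {C : List ℤ} (hC : Admissible C) :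
    Admissible (TW k ++ C) := by
  refine ⟨by simp [hC.1], fun x hx => ?_⟩
  rcases List.mem_append.1 hx with h | h
  · rw [List.eq_of_mem_replicate h]
  · exact hC.2 x h

lemma e_TW_prefix (k : ℕ) {C : List ℤ} (hC : Admissible C) (x : ℚ) (hx : 1 ≤ x)
    (h : inductance C = 1 - 1/x) :
    inductance (TW k ++ C) = 1 - 1/(x + k) := by
  induction k with
  | zero => simpa [TW] using h
  | succ k ih =>
    have hk0 : (0:ℚ) ≤ (k:ℚ) := Nat.cast_nonneg k
    have hxk : (0:ℚ) < x + k := by linarith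
    have hxk1 : (0:ℚ) < x + k + 1 := by linarith
    have hne : TW k ++ C ≠ [] := by simp [hC.1]
    have hadm : Admissible (2 :: (TW k ++ C)) := by
      have := adm_TW_append (k+1) hC
      rwa [TW_succ_cons, List.cons_append] at this
    have hstep : TW (k+1) ++ C = 2 :: (TW k ++ C) := by
      rw [TW_succ_cons, List.cons_append]
    rw [hstep, inductance_cons hne hadm, ih]
    have h2 : (2:ℚ) - (1 - 1/(x+k)) = (x + k + 1)/(x + k) := by
      field_simp; ring
    push_cast
    rw [h2, one_div_div]
    have hne1 : x + (k:ℚ) ≠ 0 := ne_of_gt hxk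
    have hne2 : x + (k:ℚ) + 1 ≠ 0 := ne_of_gt hxk1
    field_simp
    ring

lemma TW_concat (n : ℕ) : TW (n+1) = TW n ++ [2] := List.replicate_succ'

lemma sprod_TW (k : ℕ) (b : ℤ) (T : List ℤ) :
    sprod (TW (k+1)) (b :: T) = TW k ++ (b+1) :: T := by
  rw [sprod, TW_concat, List.dropLast_concat,
    List.getLast!_of_getLast? List.getLast?_concat]
  have : (2:ℤ) + (b :: T).head! - 1 = b + 1 := by
    show (2:ℤ) + b - 1 = b + 1
    ring
  rw [this, List.tail_cons]

lemma main_lemma (R : List ℤ) (hR : Admissible R) :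
    Admissible (sprodAll (R.map fun a => TW (a - 1).toNat)) ∧
    inductance (sprodAll (R.map fun a => TW (a - 1).toNat)) = 1 - inductance R := by
  induction R with
  | nil => exact absurd rfl hR.1
  | cons a R' ih =>
    have ha : 2 ≤ a := hR.2 a (List.mem_cons_self)
    obtain ⟨m, hm⟩ : ∃ m, (a - 1).toNat = m + 1 := ⟨(a - 2).toNat, by omega⟩
    have hmZ : (m : ℤ) = a - 2 := by omega
    have hmcast : ((m : ℕ) : ℚ) = (a : ℚ) - 2 := by exact_mod_cast congrArg (fun z : ℤ => (z : ℚ)) hmZ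
    cases R' with
    | nil =>
      have hgoal : sprodAll ([a].map fun a => TW (a - 1).toNat) = TW m ++ [2] := by
        show sprodAll [TW (a - 1).toNat] = TW m ++ [2]
        rw [show sprodAll [TW (a - 1).toNat] = TW (a - 1).toNat from rfl, hm, TW_concat]
      have hadm2 : Admissible [2] := ⟨List.cons_ne_nil _ _, by intro x hx; simp at hx; omega⟩
      have he2 : inductance [2] = 1 - 1/(2:ℚ) := by rw [e_singleton]; norm_num
      rw [hgoal]
      refine ⟨adm_TW_append m hadm2, ?_⟩
      rw [e_TW_prefix m hadm2 2 (by norm_num) he2, e_singleton]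
      have : (2:ℚ) + (m:ℚ) = (a:ℚ) := by rw [hmcast]; ring
      rw [this]
    | cons a' R'' =>
      have hR' : Admissible (a' :: R'') := hR.tail' (List.cons_ne_nil _ _)
      obtain ⟨ihadm, ihe⟩ := ih hR'
      obtain ⟨b, T, hBT⟩ := List.exists_cons_of_ne_nil ihadm.1
      have hsp : sprodAll ((a :: a' :: R'').map fun a => TW (a - 1).toNat)
          = sprod (TW (a - 1).toNat) (sprodAll ((a' :: R'').map fun a => TW (a - 1).toNat)) := rfl
      rw [hsp, hm, hBT, sprod_TW]
      have hadmB : Admissible (b :: T) := hBT ▸ ihadm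
      have hb : 2 ≤ b := hadmB.2 b (List.mem_cons_self)
      have hadmB' : Admissible ((b+1) :: T) := by
        refine ⟨List.cons_ne_nil _ _, fun x hx => ?_⟩
        rcases List.mem_cons.1 hx with h | h
        · omega
        · exact hadmB.2 x (List.mem_cons_of_mem _ h)
      refine ⟨adm_TW_append m hadmB', ?_⟩
      have heBpos : 0 < inductance (b :: T) := inductance_pos hadmB
      have hx : (1:ℚ) ≤ 1 + inductance (b :: T) := by linarith
      have heq : inductance ((b+1) :: T) = 1 - 1/(1 + inductance (b :: T)) := e_head_succ hadmB
      rw [e_TW_prefix m hadmB' _ hx heq]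
      rw [inductance_cons (List.cons_ne_nil _ _) hR]
      have hiherw : inductance (a' :: R'') = 1 - inductance (b :: T) := by
        rw [hBT] at ihe; linarith
      rw [hiherw]
      have hden : 1 + inductance (b :: T) + (m:ℚ) = (a:ℚ) - (1 - inductance (b :: T)) := by
        rw [hmcast]; ring
      rw [hden]

/-- Lemma 2.3 (ii): for an admissible linear chain `A = [a₁,…,a_r]`,
`A* = TW_{a_r−1} ∗ TW_{a_{r−1}−1} ∗ ⋯ ∗ TW_{a₁−1}`; i.e. the right-hand side is
admissible and its inductance is `1 − e(Aᵀ)`. -/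
theorem adjoint_eq_sprod_TW (A : List ℤ) (hA : Admissible A) :
    Admissible (sprodAll (A.reverse.map fun a => TW (a - 1).toNat)) ∧
    inductance (sprodAll (A.reverse.map fun a => TW (a - 1).toNat)) =
      1 - inductance A.reverse := by
  have hrev : Admissible A.reverse :=
    ⟨by simpa using hA.1, fun x hx => hA.2 x (List.mem_reverse.1 hx)⟩
  exact main_lemma A.reverse hrev
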